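/- Let V be a finite-dimensional vector space over a finite field k. If V is the union of n proper subspaces V₁, ..., Vₙ, then n > #k. -/

import Mathlib

/-- A finite-dimensional vector space over a finite field `k` which is the union of `n`
proper subspaces satisfies `n > #k`. -/
theorem stmt14 (k V : Type*) [Field k] [Finite k] [AddCommGroup V] [Module k V]
    [FiniteDimensional k V] (n : ℕ) (S : Fin n → Submodule k V)
    (hproper : ∀ i, S i ≠ ⊤) (hcover : ∀ x : V, ∃ i, x ∈ S i) :
    Nat.card k < n := by
  classical
  have hV : Finite V := Module.finite_of_finite k
  have := Fintype.ofFinite V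
  by_contra h
  push_neg at h
  set q := Nat.card k with hq
  have := Fintype.ofFinite k
  have hq2 : 2 ≤ q := by rw [hq, Nat.card_eq_fintype_card]; exact Fintype.one_lt_card
  -- each proper subspace has card at most |V| / q
  have hci : ∀ i, q * Nat.card (S i) ≤ Nat.card V := by
    intro i
    rw [Submodule.card_eq_card_quotient_mul_card (S i)]
    have : Nontrivial (V ⧸ S i) :=
      Submodule.Quotient.nontrivial_iff.mpr (hproper i)
    obtain ⟨x, hx⟩ := exists_ne (0 : V ⧸ S i)
    have hinj : Function.Injective (fun t : k => t • x) := smul_left_injective k hx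
    rw [mul_comm q]
    exact Nat.mul_le_mul_left _ (Nat.card_le_card_of_injective _ hinj)
  -- counting argument
  set F : Fin n → Finset V := fun i => (S i : Set V).toFinset.erase 0 with hF
  have hsub : (Finset.univ : Finset V).erase 0 ⊆ Finset.univ.biUnion F := by
    intro x hx
    rw [Finset.mem_erase] at hx
    obtain ⟨i, hi⟩ := hcover x
    refine Finset.mem_biUnion.mpr ⟨i, Finset.mem_univ _, ?_⟩
    simp [hF, hx.1, hi]
  have hcard : ∀ i, (S i : Set V).toFinset.card = Nat.card (S i) := by
    intro i
    rw [Set.toFinset_card, Nat.card_eq_fintype_card]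
    exact (Fintype.card_congr (Equiv.refl _)).symm
  have hFcard : ∀ i, (F i).card = Nat.card (S i) - 1 := by
    intro i
    rw [hF]
    rw [Finset.card_erase_of_mem (by simp [Set.mem_toFinset]), hcard]
  have hle : Fintype.card V - 1 ≤ ∑ i, (Nat.card (S i) - 1) := by
    calc Fintype.card V - 1 = ((Finset.univ : Finset V).erase 0).card := by
          rw [Finset.card_erase_of_mem (Finset.mem_univ _), Finset.card_univ]
      _ ≤ (Finset.univ.biUnion F).card := Finset.card_le_card hsub
      _ ≤ ∑ i, (F i).card := Finset.card_biUnion_le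
      _ = ∑ i, (Nat.card (S i) - 1) := by simp [hFcard]
  have hNeq : Nat.card V = Fintype.card V := Nat.card_eq_fintype_card
  have hpos : ∀ i, 1 ≤ Nat.card (S i) := fun i => Nat.card_pos
  have hsum : ∑ i, (Nat.card (S i) - 1) = (∑ i, Nat.card (S i)) - n := by
    rw [Finset.sum_tsub_distrib]
    · simp
    · intro i _; exact hpos i
  -- total sum bound : q * Σ cᵢ ≤ n * N ≤ q * N
  have hsumle : q * ∑ i, Nat.card (S i) ≤ n * Nat.card V := by
    rw [Finset.mul_sum]
    calc ∑ i, q * Nat.card (S i) ≤ ∑ _i : Fin n, Nat.card V :=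
          Finset.sum_le_sum (fun i _ => hci i)
      _ = n * Nat.card V := by simp [Finset.sum_const, mul_comm]
  have hsumN : ∑ i, Nat.card (S i) ≤ Nat.card V := by
    have : q * ∑ i, Nat.card (S i) ≤ q * Nat.card V :=
      hsumle.trans (Nat.mul_le_mul_right _ h)
    exact Nat.le_of_mul_le_mul_left this (by omega)
  have hn1 : 1 ≤ n := by
    obtain ⟨i, _⟩ := hcover 0
    exact Nat.one_le_iff_ne_zero.mpr (by rintro rfl; exact i.elim0)
  have hnn : n ≤ ∑ i, Nat.card (S i) := by
    calc n = ∑ _i : Fin n, 1 := by simp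
      _ ≤ ∑ i, Nat.card (S i) := Finset.sum_le_sum (fun i _ => hpos i)
  have hNpos : 1 ≤ Fintype.card V := Fintype.card_pos
  -- conclude n ≤ 1
  have hn : n ≤ 1 := by omega
  interval_cases n
  refine hproper 0 (Submodule.eq_top_iff'.mpr fun x => ?_)
  obtain ⟨i, hi⟩ := hcover x
  exact Fin.fin_one_eq_zero i ▸ hi
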